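/- For every left-right pair (L,R) of matrices in SL₂(ℕ₀), the directed graph F(L,R) contains no directed cycles: there is no z ∈ D₀ and nonempty finite sequence T₀, T₁, …, T_{n−1} with each T_i ∈ {L,R} such that T_{n−1}(⋯(T₁(T₀(z)))⋯) = z. -/

import Mathlib

/-- The open first quadrant of "positive" complex numbers. -/
def D0 : Set ℂ := {z : ℂ | 0 < z.re ∧ 0 < z.im}

/-- A 2×2 matrix with nonnegative integer entries has determinant 1. -/
def SL2N (T : Matrix (Fin 2) (Fin 2) ℕ) : Prop :=
  T 0 0 * T 1 1 = T 0 1 * T 1 0 + 1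

/-- The Möbius action of such a matrix on a complex number. -/
noncomputable def act (T : Matrix (Fin 2) (Fin 2) ℕ) (z : ℂ) : ℂ :=
  ((T 0 0 : ℂ) * z + (T 0 1 : ℂ)) / ((T 1 0 : ℂ) * z + (T 1 1 : ℂ))

/-- A pair of non-identity matrices in SL₂(ℕ₀) is a left-right pair if
`L(D₀) ∩ R(D₀) = ∅`. -/
def LeftRightPair (L R : Matrix (Fin 2) (Fin 2) ℕ) : Prop :=
  SL2N L ∧ SL2N R ∧ L ≠ 1 ∧ R ≠ 1 ∧ ∀ z₁ ∈ D0, ∀ z₂ ∈ D0, act L z₁ ≠ act R z₂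

lemma den_ne {T : Matrix (Fin 2) (Fin 2) ℕ} (hT : SL2N T) {z : ℂ} (hz : z ∈ D0) :
    ((T 1 0 : ℂ) * z + (T 1 1 : ℂ)) ≠ 0 := by
  intro h
  have him := congrArg Complex.im h
  have hre := congrArg Complex.re h
  simp [Complex.add_im, Complex.mul_im, Complex.add_re, Complex.mul_re] at him hre
  have hy := hz.2
  have hc : T 1 0 = 0 := by
    rcases him with h' | h'
    · exact h'
    · exact absurd h' (ne_of_gt hy)
  have hd : T 1 1 = 0 := by
    rw [hc] at hre
    exact_mod_cast by simpa using hre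
  unfold SL2N at hT
  rw [hc, hd] at hT
  simp at hT

lemma SL2N_mul {A B : Matrix (Fin 2) (Fin 2) ℕ} (hA : SL2N A) (hB : SL2N B) :
    SL2N (A * B) := by
  unfold SL2N at *
  simp only [Matrix.mul_apply, Fin.sum_univ_two]
  zify at hA hB ⊢
  linear_combination (B 0 0 * B 1 1 - B 0 1 * B 1 0) * hA + hB

lemma eq_one_of_mul_eq_one {A B : Matrix (Fin 2) (Fin 2) ℕ} (hA : SL2N A) (hB : SL2N B)
    (h : A * B = 1) : A = 1 := by
  have e00 : A 0 0 * B 0 0 + A 0 1 * B 1 0 = 1 := by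
    have := congrFun (congrFun h 0) 0
    simpa [Matrix.mul_apply, Fin.sum_univ_two, Matrix.one_apply] using this
  have e01 : A 0 0 * B 0 1 + A 0 1 * B 1 1 = 0 := by
    have := congrFun (congrFun h 0) 1
    simpa [Matrix.mul_apply, Fin.sum_univ_two, Matrix.one_apply] using this
  have e10 : A 1 0 * B 0 0 + A 1 1 * B 1 0 = 0 := by
    have := congrFun (congrFun h 1) 0
    simpa [Matrix.mul_apply, Fin.sum_univ_two, Matrix.one_apply] using this
  have e11 : A 1 0 * B 0 1 + A 1 1 * B 1 1 = 1 := by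
    have := congrFun (congrFun h 1) 1
    simpa [Matrix.mul_apply, Fin.sum_univ_two, Matrix.one_apply] using this
  have ha : 0 < A 0 0 := Nat.pos_of_ne_zero (fun hh => by simp [SL2N, hh] at hA)
  have hd : 0 < A 1 1 := Nat.pos_of_ne_zero (fun hh => by simp [SL2N, hh] at hA)
  have he : 0 < B 0 0 := Nat.pos_of_ne_zero (fun hh => by simp [SL2N, hh] at hB)
  have hh' : 0 < B 1 1 := Nat.pos_of_ne_zero (fun hh => by simp [SL2N, hh] at hB)
  have hb : A 0 1 = 0 := by
    have : A 0 1 * B 1 1 = 0 := by omega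
    rcases Nat.mul_eq_zero.mp this with h' | h' <;> omega
  have hc : A 1 0 = 0 := by
    have : A 1 0 * B 0 0 = 0 := by omega
    rcases Nat.mul_eq_zero.mp this with h' | h' <;> omega
  have had : A 0 0 * A 1 1 = 1 := by
    unfold SL2N at hA; rw [hb] at hA; simpa using hA
  have ha1 := Nat.eq_one_of_mul_eq_one_right had
  have hd1 := Nat.eq_one_of_mul_eq_one_left had
  ext i j
  fin_cases i <;> fin_cases j <;> simp [Matrix.one_apply, ha1, hd1, hb, hc]

lemma act_mem {T : Matrix (Fin 2) (Fin 2) ℕ} (hT : SL2N T) {z : ℂ} (hz : z ∈ D0) :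
    act T z ∈ D0 := by
  have hx := hz.1
  have hy := hz.2
  have hden := den_ne hT hz
  have hnorm : 0 < Complex.normSq ((T 1 0 : ℂ) * z + (T 1 1 : ℂ)) :=
    Complex.normSq_pos.mpr hden
  have hdet : ((T 0 0 : ℝ)) * (T 1 1) = (T 0 1) * (T 1 0) + 1 := by exact_mod_cast hT
  have ha : (0:ℝ) ≤ (T 0 0 : ℝ) := Nat.cast_nonneg _
  have hb : (0:ℝ) ≤ (T 0 1 : ℝ) := Nat.cast_nonneg _
  have hc : (0:ℝ) ≤ (T 1 0 : ℝ) := Nat.cast_nonneg _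
  have hd : (0:ℝ) ≤ (T 1 1 : ℝ) := Nat.cast_nonneg _
  constructor
  · show 0 < (act T z).re
    rw [act, Complex.div_re]
    have h1 : 0 < ((T 0 0 : ℂ) * z + (T 0 1 : ℂ)).re * ((T 1 0 : ℂ) * z + (T 1 1 : ℂ)).re
        + ((T 0 0 : ℂ) * z + (T 0 1 : ℂ)).im * ((T 1 0 : ℂ) * z + (T 1 1 : ℂ)).im := by
      simp only [Complex.add_re, Complex.add_im, Complex.mul_re, Complex.mul_im,
        Complex.natCast_re, Complex.natCast_im]
      nlinarith [hdet, mul_pos hx hy, mul_pos hx hx, mul_pos hy hy,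
        mul_nonneg (mul_nonneg ha hc) (mul_pos hx hx).le,
        mul_nonneg (mul_nonneg ha hc) (mul_pos hy hy).le,
        mul_nonneg (mul_nonneg hb hc) hx.le, mul_nonneg hb hd,
        mul_nonneg (mul_nonneg ha hd) hx.le]
    have := div_pos h1 hnorm
    calc (0:ℝ) < _ := this
      _ = _ := by ring
  · show 0 < (act T z).im
    rw [act, Complex.div_im]
    have h1 : ((T 0 0 : ℂ) * z + (T 0 1 : ℂ)).im * ((T 1 0 : ℂ) * z + (T 1 1 : ℂ)).re
        - ((T 0 0 : ℂ) * z + (T 0 1 : ℂ)).re * ((T 1 0 : ℂ) * z + (T 1 1 : ℂ)).im = z.im := by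
      simp only [Complex.add_re, Complex.add_im, Complex.mul_re, Complex.mul_im,
        Complex.natCast_re, Complex.natCast_im]
      nlinarith [hdet]
    have := div_pos (h1 ▸ hy : (0:ℝ) < _) hnorm
    calc (0:ℝ) < _ := this
      _ = _ := by ring

lemma act_act {T S : Matrix (Fin 2) (Fin 2) ℕ} (hT : SL2N T) (hS : SL2N S)
    {z : ℂ} (hz : z ∈ D0) : act T (act S z) = act (T * S) z := by
  have hdS := den_ne hS hz
  have hdT := den_ne hT (act_mem hS hz)
  have hdTS := den_ne (SL2N_mul hT hS) hz
  unfold act at hdT ⊢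
  rw [div_eq_div_iff hdT hdTS]
  have hmul : ∀ i j : Fin 2, ((T * S) i j : ℂ) = (T i 0 : ℂ) * (S 0 j) + (T i 1) * (S 1 j) := by
    intro i j
    push_cast [Matrix.mul_apply, Fin.sum_univ_two]
    ring
  rw [hmul, hmul, hmul, hmul]
  have hdS' : z * (S 1 0 : ℂ) + (S 1 1 : ℂ) ≠ 0 := by rw [mul_comm]; exact hdS
  field_simp
  ring

lemma no_fixed_point {M : Matrix (Fin 2) (Fin 2) ℕ} (hM : SL2N M) (hM1 : M ≠ 1)
    {z : ℂ} (hz : z ∈ D0) : act M z ≠ z := by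
  intro heq
  have hden := den_ne hM hz
  have hx := hz.1
  have hy := hz.2
  have h2 : (M 0 0 : ℂ) * z + (M 0 1 : ℂ) = z * ((M 1 0 : ℂ) * z + (M 1 1 : ℂ)) := by
    rw [act] at heq
    rw [div_eq_iff hden] at heq
    linear_combination heq
  have hre := congrArg Complex.re h2
  have him := congrArg Complex.im h2
  simp only [Complex.add_re, Complex.add_im, Complex.mul_re, Complex.mul_im,
    Complex.natCast_re, Complex.natCast_im] at hre him
  set a := (M 0 0 : ℝ)
  set b := (M 0 1 : ℝ)
  set c := (M 1 0 : ℝ)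
  set d := (M 1 1 : ℝ)
  set x := z.re
  set y := z.im
  have ha : 0 ≤ a := Nat.cast_nonneg _
  have hb : 0 ≤ b := Nat.cast_nonneg _
  have hc0 : 0 ≤ c := Nat.cast_nonneg _
  have hd0 : 0 ≤ d := Nat.cast_nonneg _
  -- him gives a = 2*c*x + d
  have hEim : a = 2 * c * x + d := by
    have : a * y = 2 * c * x * y + d * y := by nlinarith [him]
    have hy' : y ≠ 0 := ne_of_gt hy
    field_simp at this
    nlinarith [this]
  have hkey : c * (x ^ 2 + y ^ 2) + b = 0 := by nlinarith [hre, hEim]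
  have hcz : c = 0 := by nlinarith [mul_pos hx hx, mul_pos hy hy]
  have hbz : b = 0 := by nlinarith [mul_pos hx hx, mul_pos hy hy]
  have had : a = d := by rw [hEim, hcz]; ring
  have hcN : M 1 0 = 0 := by
    have h' := hcz; unfold c at h'; exact_mod_cast h'
  have hbN : M 0 1 = 0 := by
    have h' := hbz; unfold b at h'; exact_mod_cast h'
  have hadN : M 0 0 = M 1 1 := by
    have h' := had; unfold a d at h'; exact_mod_cast h' 
  have h1 : M 0 0 * M 1 1 = 1 := by
    unfold SL2N at hM; rw [hbN] at hM; simpa using hM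
  have ha1 := Nat.eq_one_of_mul_eq_one_right h1
  have hd1 := Nat.eq_one_of_mul_eq_one_left h1
  apply hM1
  ext i j
  fin_cases i <;> fin_cases j <;> simp [Matrix.one_apply, ha1, hd1, hbN, hcN]

/-- The graph F(L,R) has no directed cycles: applying a nonempty word in
L and R to a point of D₀ never returns the same point. -/
theorem no_directed_cycle (L R : Matrix (Fin 2) (Fin 2) ℕ)
    (h : LeftRightPair L R) (z : ℂ) (hz : z ∈ D0)
    (w : List (Matrix (Fin 2) (Fin 2) ℕ)) (hne : w ≠ [])
    (hw : ∀ T ∈ w, T = L ∨ T = R) :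
    w.foldl (fun x T => act T x) z ≠ z := by
  obtain ⟨hL, hR, hL1, hR1, -⟩ := h
  have key : ∀ (w : List (Matrix (Fin 2) (Fin 2) ℕ)), w ≠ [] →
      (∀ T ∈ w, T = L ∨ T = R) → ∀ z ∈ D0, ∃ M, SL2N M ∧ M ≠ 1 ∧
        w.foldl (fun x T => act T x) z = act M z := by
    intro w
    induction w with
    | nil => intro h'; exact absurd rfl h'
    | cons T w' ih =>
      intro _ hmem z hz
      have hT : SL2N T ∧ T ≠ 1 := by
        rcases hmem T (List.mem_cons_self) with rfl | rfl
        exacts [⟨hL, hL1⟩, ⟨hR, hR1⟩]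
      by_cases hw' : w' = []
      · subst hw'; exact ⟨T, hT.1, hT.2, rfl⟩
      · obtain ⟨M, hM, hM1, hfold⟩ := ih hw'
          (fun S hS => hmem S (List.mem_cons_of_mem _ hS)) (act T z) (act_mem hT.1 hz)
        refine ⟨M * T, SL2N_mul hM hT.1, ?_, ?_⟩
        · intro hcon; exact hM1 (eq_one_of_mul_eq_one hM hT.1 hcon)
        · show w'.foldl (fun x T => act T x) (act T z) = _
          rw [hfold, act_act hM hT.1 hz]
  obtain ⟨M, hM, hM1, hfold⟩ := key w hne hw z hz
  rw [hfold]
  exact no_fixed_point hM hM1 hz
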